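/- Global average coverage over all dimensions and prediction steps (requirement (4) of the paper, which follows from per-coordinate coverage convergence): with p dimensions and d₁ prediction steps, and an independent copy of the adaptive-adjustment setup for each pair (i, j) (1 ≤ i ≤ p, 1 ≤ j ≤ d₁) with lag equal to the prediction step j, the overall empirical coverage (1/(T·p·d₁))·Σ_{t=1}^{T} Σ_{i=1}^{p} Σ_{j=1}^{d₁} cover^{(i,j)}(t) converges to 1 − α as T → ∞. -/

import Mathlib

open Finset Filter

section Aux

variable (αv γ M : ℝ) (j : ℕ) (c a : ℕ → ℝ)

/-- single step absolute bound -/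
lemma aci_step_abs (hγ : 0 < γ) (hα0 : 0 ≤ αv) (hα1 : αv ≤ 1)
    (hc : ∀ t, 1 ≤ t → c t = 0 ∨ c t = 1)
    (ha0 : ∀ t, 1 ≤ t → t ≤ j + 1 → a t = 0)
    (harec : ∀ t, j + 1 ≤ t → a (t+1) = a t + γ * (1 - c (t - j) - αv)) :
    ∀ t, 1 ≤ t → |a (t+1) - a t| ≤ γ := by
  intro t ht
  rcases le_or_gt (j+1) t with h | h
  · rw [harec t h]
    have h1 : 1 ≤ t - j := by omega
    rcases hc (t-j) h1 with h' | h' <;> rw [h'] <;> rw [abs_le] <;>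
      constructor <;> nlinarith
  · rw [ha0 t ht (by omega), ha0 (t+1) (by omega) (by omega)]
    simpa using hγ.le

lemma aci_chain (hγ : 0 < γ) (hα0 : 0 ≤ αv) (hα1 : αv ≤ 1)
    (hc : ∀ t, 1 ≤ t → c t = 0 ∨ c t = 1)
    (ha0 : ∀ t, 1 ≤ t → t ≤ j + 1 → a t = 0)
    (harec : ∀ t, j + 1 ≤ t → a (t+1) = a t + γ * (1 - c (t - j) - αv)) :
    ∀ n t, 1 ≤ t → |a (t+n) - a t| ≤ n * γ := by
  intro n
  induction n with
  | zero => intro t ht; simp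
  | succ n ih =>
      intro t ht
      have h1 := ih t ht
      have h2 := aci_step_abs αv γ j c a hγ hα0 hα1 hc ha0 harec (t+n) (by omega)
      calc |a (t+(n+1)) - a t| = |(a (t+n+1) - a (t+n)) + (a (t+n) - a t)| := by
            ring_nf
        _ ≤ |a (t+n+1) - a (t+n)| + |a (t+n) - a t| := abs_add_le _ _
        _ ≤ γ + n * γ := by linarith
        _ = (n+1 : ℕ) * γ := by push_cast; ring

lemma aci_abs_a (hγ : 0 < γ) (hα0 : 0 ≤ αv) (hα1 : αv ≤ 1) (hM : 0 ≤ M)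
    (hc : ∀ t, 1 ≤ t → c t = 0 ∨ c t = 1)
    (hc1 : ∀ t, 1 ≤ t → M < a t → c t = 1)
    (hc0 : ∀ t, 1 ≤ t → a t ≤ -M → c t = 0)
    (ha0 : ∀ t, 1 ≤ t → t ≤ j + 1 → a t = 0)
    (harec : ∀ t, j + 1 ≤ t → a (t+1) = a t + γ * (1 - c (t - j) - αv)) :
    ∀ t, 1 ≤ t → |a t| ≤ M + (j+1) * γ := by
  have hchain := aci_chain αv γ j c a hγ hα0 hα1 hc ha0 harec
  have hB : (0:ℝ) ≤ M + (j+1) * γ := by positivity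
  -- upper bound
  have hub : ∀ t, 1 ≤ t → a t ≤ M + (j+1) * γ := by
    intro t
    induction t using Nat.strong_induction_on with
    | _ t ih =>
      intro ht
      rcases le_or_gt t (j+1) with h | h
      · rw [ha0 t ht h]; exact hB
      · obtain ⟨t', rfl⟩ : ∃ t', t = t' + 1 := ⟨t - 1, by omega⟩
        have ht' : j + 1 ≤ t' := by omega
        have htj : 1 ≤ t' - j := by omega
        rcases le_or_gt (a (t' - j)) M with h1 | h1
        · have := hchain (j+1) (t' - j) htj
          have heq : t' - j + (j+1) = t' + 1 := by omega
          rw [heq] at this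
          have := abs_le.mp this
          push_cast at this
          linarith [this.2]
        · have hcv := hc1 (t' - j) htj h1
          rw [harec t' ht', hcv]
          have := ih t' (by omega) (by omega)
          nlinarith
  -- lower bound
  have hlb : ∀ t, 1 ≤ t → -(M + (j+1) * γ) ≤ a t := by
    intro t
    induction t using Nat.strong_induction_on with
    | _ t ih =>
      intro ht
      rcases le_or_gt t (j+1) with h | h
      · rw [ha0 t ht h]; linarith
      · obtain ⟨t', rfl⟩ : ∃ t', t = t' + 1 := ⟨t - 1, by omega⟩
        have ht' : j + 1 ≤ t' := by omega
        have htj : 1 ≤ t' - j := by omega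
        rcases le_or_gt (a (t' - j)) (-M) with h1 | h1
        · have hcv := hc0 (t' - j) htj h1
          rw [harec t' ht', hcv]
          have := ih t' (by omega) (by omega)
          nlinarith
        · have := hchain (j+1) (t' - j) htj
          have heq : t' - j + (j+1) = t' + 1 := by omega
          rw [heq] at this
          have := abs_le.mp this
          push_cast at this
          linarith [this.1]
  intro t ht
  rw [abs_le]
  exact ⟨hlb t ht, hub t ht⟩

lemma aci_telescope (hγ : 0 < γ)
    (ha0 : ∀ t, 1 ≤ t → t ≤ j + 1 → a t = 0)
    (harec : ∀ t, j + 1 ≤ t → a (t+1) = a t + γ * (1 - c (t - j) - αv)) :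
    ∀ n : ℕ, a (j + n + 1) = γ * (n * (1 - αv) - ∑ t ∈ Icc 1 n, c t) := by
  intro n
  induction n with
  | zero => simpa using ha0 (j+1) (by omega) le_rfl
  | succ n ih =>
      have h1 : j + 1 ≤ j + n + 1 := by omega
      have h2 : j + n + 1 - j = n + 1 := by omega
      have := harec (j + n + 1) h1
      rw [h2] at this
      have hsum : ∑ t ∈ Icc 1 (n+1), c t = (∑ t ∈ Icc 1 n, c t) + c (n+1) :=
        Finset.sum_Icc_succ_top (by omega) _
      have : a (j + (n+1) + 1) = a (j + n + 1) + γ * (1 - c (n+1) - αv) := by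
        convert this using 3 <;> omega
      rw [this, ih, hsum]
      push_cast
      ring

lemma aci_sum_bound (hγ : 0 < γ) (hα0 : 0 ≤ αv) (hα1 : αv ≤ 1) (hM : 0 ≤ M)
    (hc : ∀ t, 1 ≤ t → c t = 0 ∨ c t = 1)
    (hc1 : ∀ t, 1 ≤ t → M < a t → c t = 1)
    (hc0 : ∀ t, 1 ≤ t → a t ≤ -M → c t = 0)
    (ha0 : ∀ t, 1 ≤ t → t ≤ j + 1 → a t = 0)
    (harec : ∀ t, j + 1 ≤ t → a (t+1) = a t + γ * (1 - c (t - j) - αv)) :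
    ∀ T : ℕ, |(∑ t ∈ Icc 1 T, c t) - T * (1 - αv)| ≤
      (M + (j+1) * γ) / γ + 2 * j := by
  have habs := aci_abs_a αv γ M j c a hγ hα0 hα1 hM hc hc1 hc0 ha0 harec
  have htel := aci_telescope αv γ j c a hγ ha0 harec
  have hBγ : (0:ℝ) ≤ (M + (j+1) * γ) / γ := by positivity
  have hj0 : (0:ℝ) ≤ (j:ℝ) := Nat.cast_nonneg j
  have hc01 : ∀ t, 1 ≤ t → 0 ≤ c t ∧ c t ≤ 1 := by
    intro t ht; rcases hc t ht with h | h <;> rw [h] <;> norm_num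
  have hsum01 : ∀ m n : ℕ, 0 ≤ (∑ t ∈ Ioc m n, c t) ∧
      (∑ t ∈ Ioc m n, c t) ≤ ((n - m : ℕ) : ℝ) := by
    intro m n
    constructor
    · exact Finset.sum_nonneg fun t ht =>
        (hc01 t (by have := (Finset.mem_Ioc.mp ht).1; omega)).1
    · calc (∑ t ∈ Ioc m n, c t) ≤ ∑ t ∈ Ioc m n, 1 :=
          Finset.sum_le_sum fun t ht =>
            (hc01 t (by have := (Finset.mem_Ioc.mp ht).1; omega)).2
        _ = ((n - m : ℕ) : ℝ) := by simp [Nat.card_Ioc]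
  have hIcc : ∀ n : ℕ, Icc 1 n = Ioc 0 n := fun n => by
    rw [← Finset.Icc_add_one_left_eq_Ioc]; rfl
  intro T
  rcases le_or_gt j T with hT | hT
  · obtain ⟨n, rfl⟩ : ∃ n, T = j + n := ⟨T - j, by omega⟩
    have hsplit : (∑ t ∈ Ioc 0 n, c t) + (∑ t ∈ Ioc n (j+n), c t) =
        ∑ t ∈ Ioc 0 (j+n), c t :=
      Finset.sum_Ioc_consecutive _ (by omega) (by omega)
    have h1 : (∑ t ∈ Ioc 0 n, c t) - n * (1 - αv) = -(a (j + n + 1) / γ) := by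
      rw [← hIcc, htel n]; field_simp; ring
    have h2 : |a (j + n + 1)| ≤ M + (j+1) * γ := habs _ (by omega)
    have h3 : |(∑ t ∈ Ioc 0 n, c t) - n * (1 - αv)| ≤ (M + (j+1) * γ) / γ := by
      rw [h1, abs_neg, abs_div, abs_of_pos hγ]
      gcongr
    have hR := hsum01 n (j+n)
    have hcard : ((j + n - n : ℕ) : ℝ) = (j : ℝ) := by
      norm_cast; omega
    rw [hcard] at hR
    have hA := abs_le.mp h3
    have e1 : ((j+n:ℕ):ℝ) * (1-αv) = (n:ℝ)*(1-αv) + (j:ℝ)*(1-αv) := by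
      push_cast; ring
    rw [hIcc, ← hsplit, e1, abs_le]
    constructor
    · nlinarith [hA.1, hR.1, hR.2]
    · nlinarith [hA.2, hR.1, hR.2]
  · -- T < j : trivial bound
    have h0 := hsum01 0 T
    have hc3 : ((T - 0 : ℕ):ℝ) = (T:ℝ) := by norm_cast
    rw [hc3] at h0
    have hTj : (T:ℝ) ≤ (j:ℝ) := by exact_mod_cast hT.le
    have hT0 : (0:ℝ) ≤ (T:ℝ) := Nat.cast_nonneg T
    rw [hIcc, abs_le]
    constructor
    · nlinarith [h0.1, h0.2]
    · nlinarith [h0.1, h0.2]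

end Aux

/-- Global average coverage over all dimensions and prediction steps:
with an independent copy of the adaptive-adjustment setup for each pair
`(i, j)` (lag equal to the prediction step `j`), the overall empirical coverage
`(1/(T·p·d₁))·∑_{t=1}^{T} ∑_{i=1}^{p} ∑_{j=1}^{d₁} cover i j t` converges to
`1 − α` as `T → ∞`. -/
theorem global_average_coverage_tendsto
    (α γ M : ℝ) (p d₁ : ℕ)
    (hα0 : 0 ≤ α) (hα1 : α ≤ 1) (hγ : 0 < γ) (hM : 0 ≤ M)
    (hp : 1 ≤ p) (hd : 1 ≤ d₁)
    (s qhat a cover : ℕ → ℕ → ℕ → ℝ)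
    (hs : ∀ i ∈ Icc 1 p, ∀ j ∈ Icc 1 d₁, ∀ t, 1 ≤ t →
      0 ≤ s i j t ∧ s i j t ≤ M)
    (hq : ∀ i ∈ Icc 1 p, ∀ j ∈ Icc 1 d₁, ∀ t, 1 ≤ t →
      0 ≤ qhat i j t ∧ qhat i j t ≤ M)
    (hcover : ∀ i ∈ Icc 1 p, ∀ j ∈ Icc 1 d₁, ∀ t, cover i j t =
      if 0 < qhat i j t + a i j t ∧ s i j t ≤ qhat i j t + a i j t
        then (1 : ℝ) else 0)
    (ha0 : ∀ i ∈ Icc 1 p, ∀ j ∈ Icc 1 d₁, ∀ t, 1 ≤ t → t ≤ j + 1 → a i j t = 0)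
    (harec : ∀ i ∈ Icc 1 p, ∀ j ∈ Icc 1 d₁, ∀ t, j + 1 ≤ t →
      a i j (t + 1) = a i j t + γ * (1 - cover i j (t - j) - α)) :
    Tendsto
      (fun T : ℕ =>
        (1 / ((T : ℝ) * (p : ℝ) * (d₁ : ℝ))) *
          ∑ t ∈ Icc 1 T, ∑ i ∈ Icc 1 p, ∑ j ∈ Icc 1 d₁, cover i j t)
      atTop (nhds (1 - α)) := by
  set C : ℝ := (M + (d₁ + 1) * γ) / γ + 2 * d₁ with hC
  -- per-pair sum bound
  have key : ∀ i ∈ Icc 1 p, ∀ j ∈ Icc 1 d₁, ∀ T : ℕ,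
      |(∑ t ∈ Icc 1 T, cover i j t) - T * (1 - α)| ≤ C := by
    intro i hi j hj T
    have hj1 : 1 ≤ j ∧ j ≤ d₁ := Finset.mem_Icc.mp hj
    have hc : ∀ t, 1 ≤ t → cover i j t = 0 ∨ cover i j t = 1 := by
      intro t ht
      rw [hcover i hi j hj t]
      split <;> simp
    have hc1 : ∀ t, 1 ≤ t → M < a i j t → cover i j t = 1 := by
      intro t ht hMa
      rw [hcover i hi j hj t, if_pos]
      obtain ⟨hq0, hqM⟩ := hq i hi j hj t ht
      obtain ⟨hs0, hsM⟩ := hs i hi j hj t ht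
      constructor <;> linarith
    have hc0 : ∀ t, 1 ≤ t → a i j t ≤ -M → cover i j t = 0 := by
      intro t ht hMa
      rw [hcover i hi j hj t, if_neg]
      obtain ⟨hq0, hqM⟩ := hq i hi j hj t ht
      rintro ⟨h1, -⟩
      linarith
    have hb := aci_sum_bound α γ M j (cover i j) (a i j) hγ hα0 hα1 hM
      hc hc1 hc0 (ha0 i hi j hj) (harec i hi j hj) T
    refine hb.trans ?_
    rw [hC]
    have hjd : (j : ℝ) ≤ (d₁ : ℝ) := by exact_mod_cast hj1.2
    have : (M + ((j:ℝ)+1) * γ) / γ ≤ (M + ((d₁:ℝ)+1) * γ) / γ := by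
      gcongr
    linarith
  have hC0 : 0 ≤ C := by
    rw [hC]; positivity
  -- norm bound on the deviation
  have hbound : ∀ T : ℕ, 1 ≤ T →
      ‖(1 / ((T : ℝ) * (p : ℝ) * (d₁ : ℝ))) *
        (∑ t ∈ Icc 1 T, ∑ i ∈ Icc 1 p, ∑ j ∈ Icc 1 d₁, cover i j t)
        - (1 - α)‖ ≤ C / T := by
    intro T hT
    have hT0 : (0:ℝ) < T := by exact_mod_cast hT
    have hp0 : (0:ℝ) < p := by exact_mod_cast hp
    have hd0 : (0:ℝ) < d₁ := by exact_mod_cast hd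
    have hswap : (∑ t ∈ Icc 1 T, ∑ i ∈ Icc 1 p, ∑ j ∈ Icc 1 d₁, cover i j t)
        = ∑ i ∈ Icc 1 p, ∑ j ∈ Icc 1 d₁, ∑ t ∈ Icc 1 T, cover i j t := by
      rw [Finset.sum_comm]
      exact Finset.sum_congr rfl fun i _ => Finset.sum_comm
    have hsub : (∑ i ∈ Icc 1 p, ∑ j ∈ Icc 1 d₁, ∑ t ∈ Icc 1 T, cover i j t)
        - (T:ℝ) * p * d₁ * (1 - α)
        = ∑ i ∈ Icc 1 p, ∑ j ∈ Icc 1 d₁,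
            ((∑ t ∈ Icc 1 T, cover i j t) - T * (1 - α)) := by
      simp only [Finset.sum_sub_distrib, Finset.sum_const, Nat.card_Icc,
        nsmul_eq_mul]
      simp only [Nat.add_sub_cancel]
      ring
    have habs : |(∑ i ∈ Icc 1 p, ∑ j ∈ Icc 1 d₁,
        ((∑ t ∈ Icc 1 T, cover i j t) - T * (1 - α)))| ≤ p * d₁ * C := by
      calc |(∑ i ∈ Icc 1 p, ∑ j ∈ Icc 1 d₁,
            ((∑ t ∈ Icc 1 T, cover i j t) - T * (1 - α)))|
          ≤ ∑ i ∈ Icc 1 p, |∑ j ∈ Icc 1 d₁,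
            ((∑ t ∈ Icc 1 T, cover i j t) - T * (1 - α))| :=
            Finset.abs_sum_le_sum_abs _ _
        _ ≤ ∑ i ∈ Icc 1 p, ∑ j ∈ Icc 1 d₁,
            |(∑ t ∈ Icc 1 T, cover i j t) - T * (1 - α)| :=
            Finset.sum_le_sum fun i _ => Finset.abs_sum_le_sum_abs _ _
        _ ≤ ∑ i ∈ Icc 1 p, ∑ j ∈ Icc 1 d₁, C :=
            Finset.sum_le_sum fun i hi => Finset.sum_le_sum fun j hj =>
              key i hi j hj T
        _ = p * d₁ * C := by
            simp [Finset.sum_const, Nat.card_Icc, nsmul_eq_mul]; ring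
    have heq : (1 / ((T : ℝ) * (p : ℝ) * (d₁ : ℝ))) *
        (∑ t ∈ Icc 1 T, ∑ i ∈ Icc 1 p, ∑ j ∈ Icc 1 d₁, cover i j t)
        - (1 - α)
        = (1 / ((T : ℝ) * (p : ℝ) * (d₁ : ℝ))) *
          ((∑ i ∈ Icc 1 p, ∑ j ∈ Icc 1 d₁, ∑ t ∈ Icc 1 T, cover i j t)
            - (T:ℝ) * p * d₁ * (1 - α)) := by
      rw [hswap]
      field_simp
    rw [Real.norm_eq_abs, heq, hsub, abs_mul, abs_of_pos (by positivity :
      (0:ℝ) < 1 / ((T : ℝ) * (p : ℝ) * (d₁ : ℝ)))]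
    calc (1 / ((T : ℝ) * (p : ℝ) * (d₁ : ℝ))) *
          |(∑ i ∈ Icc 1 p, ∑ j ∈ Icc 1 d₁,
            ((∑ t ∈ Icc 1 T, cover i j t) - T * (1 - α)))|
        ≤ (1 / ((T : ℝ) * (p : ℝ) * (d₁ : ℝ))) * (p * d₁ * C) := by
          apply mul_le_mul_of_nonneg_left habs (by positivity)
      _ = C / T := by field_simp
  -- conclude by squeezing
  have hzero : Tendsto (fun T : ℕ =>
      (1 / ((T : ℝ) * (p : ℝ) * (d₁ : ℝ))) *
        (∑ t ∈ Icc 1 T, ∑ i ∈ Icc 1 p, ∑ j ∈ Icc 1 d₁, cover i j t)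
        - (1 - α)) atTop (nhds 0) := by
    refine squeeze_zero_norm' ?_ (tendsto_const_div_atTop_nhds_zero_nat C)
    filter_upwards [eventually_ge_atTop 1] with T hT
    exact hbound T hT
  have := hzero.add_const (1 - α)
  simpa using this
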